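/- If L ⊆ {0,1}* is a regular language, then its winning set W(L) ⊆ {A,B}* is regular. -/

import Mathlib

/-- Left derivative: `lderiv s T = {v | s :: v ∈ T}`. -/
def lderiv (s : Bool) (T : Set (List Bool)) : Set (List Bool) := {v | s :: v ∈ T}

/-- Winning-set membership. Turn orders are lists over `Bool` with
`false` = A (Alice) and `true` = B (Bob), so that `A < B`. -/
def winW : List Bool → Set (List Bool) → Prop
  | [], T => [] ∈ T
  | (false :: v), T => winW v (lderiv false T) ∨ winW v (lderiv true T)
  | (true :: v), T => winW v (lderiv false T) ∧ winW v (lderiv true T)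

/-- The winning set of a binary language. -/
def winningSet (T : Set (List Bool)) : Set (List Bool) := {w | winW w T}

open Classical in
noncomputable def WS.phi {σ : Type} (M : DFA Bool σ) : Bool → (σ → Bool) → (σ → Bool)
  | false, h, q => h (M.step q false) || h (M.step q true)
  | true, h, q => h (M.step q false) && h (M.step q true)

noncomputable def WS.app {σ : Type} (M : DFA Bool σ) : List Bool → (σ → Bool) → (σ → Bool)
  | [], h => h
  | a :: v, h => WS.phi M a (WS.app M v h)

open Classical in
noncomputable def WS.base {σ : Type} (M : DFA Bool σ) : σ → Bool :=
  fun q => decide (q ∈ M.accept)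

lemma WS.lderiv_acceptsFrom {σ : Type} (M : DFA Bool σ) (q : σ) (b : Bool) :
    lderiv b (M.acceptsFrom q) = M.acceptsFrom (M.step q b) := rfl

lemma WS.winW_iff {σ : Type} (M : DFA Bool σ) :
    ∀ (w : List Bool) (q : σ), winW w (M.acceptsFrom q) ↔ WS.app M w (WS.base M) q = true := by
  intro w
  induction w with
  | nil =>
    intro q
    simp only [winW, WS.app, WS.base, decide_eq_true_eq]
    exact Iff.rfl
  | cons a v ih =>
    intro q
    cases a <;>
      simp [winW, WS.lderiv_acceptsFrom, ih, WS.app, WS.phi]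

open Classical in
/-- the winning set of a regular language is regular. -/
theorem winningSet_regular (L : Language Bool) (hL : L.IsRegular) :
    Language.IsRegular (winningSet L : Language Bool) := by
  obtain ⟨σ, hfin, M, hM⟩ := hL
  refine ⟨(σ → Bool) → Bool, by infer_instance, ?_, ?_⟩
  · exact
      { step := fun G a => fun h => G (WS.phi M a h)
        start := fun h => h M.start
        accept := {G | G (WS.base M) = true} }
  · ext w
    have key : ∀ (w : List Bool) (G : (σ → Bool) → Bool) (h : σ → Bool),
        (DFA.evalFrom
          { step := fun G a => fun h => G (WS.phi M a h)
            start := fun h => h M.start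
            accept := {G | G (WS.base M) = true} } G w) h = G (WS.app M w h) := by
      intro w
      induction w with
      | nil => intro G h; rfl
      | cons a v ih => intro G h; simpa [DFA.evalFrom, WS.app] using ih _ h
    have hmem : w ∈ winningSet L ↔ winW w (M.acceptsFrom M.start) := by
      rw [← hM]; rfl
    simp only [DFA.mem_accepts, DFA.eval, key, Set.mem_setOf_eq]
    exact (hmem.trans (WS.winW_iff M w M.start)).symm
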